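/- For every k ≥ 0, the minimal DFA recognizing the language L(A_k) has depth 2^{k+1} − 1, where A_k is the NFA with states {0, 1, …, k}, alphabet {a_0, a_1, …, a_k}, all states initial, accepting state 0, and transitions: i·a_j = {i} whenever k ≥ i > j ≥ 0, and i·a_i = {0, 1, …, i−1} whenever k ≥ i ≥ 1 (no other transitions). -/

import Mathlib

/-- `subk k w` is the set of scattered subwords of `w` of length at most `k`. -/
def subk {α : Type*} (k : ℕ) (w : List α) : Set (List α) :=
  {u | u.length ≤ k ∧ u.Sublist w}

/-- Two words are `k`-equivalent if they have the same subwords of length at most `k`. -/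
def kEquiv {α : Type*} (k : ℕ) (u v : List α) : Prop :=
  subk k u = subk k v

/-- A language is `k`-piecewise testable (Simon's characterization):
`k`-equivalent words are equi-members. -/
def IsPT {α : Type*} (k : ℕ) (L : Language α) : Prop :=
  ∀ u v : List α, kEquiv k u v → (u ∈ L ↔ v ∈ L)

/-- A DFA is minimal if all states are reachable and pairwise distinguishable. -/
def IsMinimalDFA {α σ : Type*} (A : DFA α σ) : Prop :=
  (∀ q : σ, ∃ w : List α, A.eval w = q) ∧
  ∀ p q : σ,
    (∀ w : List α, (A.evalFrom p w ∈ A.accept ↔ A.evalFrom q w ∈ A.accept)) → p = q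

/-- There is a simple path (pairwise distinct states) with `m` transitions in the DFA `A`. -/
def DFAHasSimplePath {α σ : Type*} (A : DFA α σ) (m : ℕ) : Prop :=
  ∃ (qs : Fin (m + 1) → σ) (as : Fin m → α),
    Function.Injective qs ∧ ∀ i : Fin m, A.step (qs i.castSucc) (as i) = qs i.succ

/-- The depth of a DFA: the number of transitions on a longest simple path. -/
noncomputable def dfaDepth {α σ : Type*} (A : DFA α σ) : ℕ :=
  sSup {m | DFAHasSimplePath A m}

/-- There is a simple path (pairwise distinct states) with `m` transitions in the NFA `A`. -/
def NFAHasSimplePath {α σ : Type*} (A : NFA α σ) (m : ℕ) : Prop :=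
  ∃ (qs : Fin (m + 1) → σ) (as : Fin m → α),
    Function.Injective qs ∧ ∀ i : Fin m, qs i.succ ∈ A.step (qs i.castSucc) (as i)

/-- The depth of an NFA: the number of transitions on a longest simple path. -/
noncomputable def nfaDepth {α σ : Type*} (A : NFA α σ) : ℕ :=
  sSup {m | NFAHasSimplePath A m}

/-- The NFA `A_k`: states `{0,…,k}`, alphabet `{a_0,…,a_k}` (both modeled by
`Fin (k+1)`), all states initial, accepting state `0`, with `i·a_j = {i}` for
`i > j` and `i·a_i = {0,…,i-1}` for `i ≥ 1` (no other transitions). -/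
def Ak (k : ℕ) : NFA (Fin (k + 1)) (Fin (k + 1)) where
  step := fun q a =>
    if a < q then {q} else if q = a ∧ 0 < q then {p | p < q} else ∅
  start := Set.univ
  accept := {0}




lemma ak_mem_step {k : ℕ} (q a p : Fin (k+1)) :
    p ∈ (Ak k).step q a ↔ ((a < q ∧ p = q) ∨ (q = a ∧ 0 < q ∧ p < q)) := by
  simp only [Ak]
  split_ifs with h1 h2
  · have hqa : ¬ (q = a) := fun h => absurd (h ▸ h1) (lt_irrefl _)
    simp [h1, hqa]
  · obtain ⟨rfl, h0⟩ := h2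
    simp [Set.mem_setOf_eq]
    tauto
  · simp [h1, h2]
    tauto

lemma ak_mem_stepSet {k : ℕ} (S : Set (Fin (k+1))) (a p : Fin (k+1)) :
    p ∈ (Ak k).stepSet S a ↔ ((p ∈ S ∧ a < p) ∨ (a ∈ S ∧ 0 < a ∧ p < a)) := by
  rw [NFA.mem_stepSet]
  constructor
  · rintro ⟨t, htS, hstep⟩
    rcases (ak_mem_step t a p).1 hstep with ⟨h1, rfl⟩ | ⟨rfl, h2, h3⟩
    · exact Or.inl ⟨htS, h1⟩
    · exact Or.inr ⟨htS, h2, h3⟩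
  · rintro (⟨hpS, hap⟩ | ⟨haS, h0, hpa⟩)
    · exact ⟨p, hpS, (ak_mem_step p a p).2 (Or.inl ⟨hap, rfl⟩)⟩
    · exact ⟨a, haS, (ak_mem_step a a p).2 (Or.inr ⟨rfl, h0, hpa⟩)⟩


/-- the set of states encoded by the binary representation of `v` -/
def fset (k v : ℕ) : Set (Fin (k+1)) := {q | v.testBit q.val}

lemma low_testBit_self {v j : ℕ} (h : v % 2^(j+1) = 2^j) : v.testBit j = true := by
  have := Nat.testBit_mod_two_pow v (j+1) j
  rw [h] at this
  simpa [Nat.testBit_two_pow] using this.symm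

lemma low_testBit_lt {v j p : ℕ} (h : v % 2^(j+1) = 2^j) (hp : p < j) : v.testBit p = false := by
  have := Nat.testBit_mod_two_pow v (j+1) p
  rw [h, Nat.testBit_two_pow] at this
  have hd : decide (p < j+1) = true := by simp; omega
  rw [hd, Bool.true_and] at this
  rw [← this]
  simp; omega

lemma low_pos {v j : ℕ} (h : v % 2^(j+1) = 2^j) : 0 < v := by
  rcases Nat.eq_zero_or_pos v with rfl | hv
  · have h2 := Nat.two_pow_pos j
    simp at h
    omega
  · exact hv

lemma testBit_pred_lt {v j p : ℕ} (h : v % 2^(j+1) = 2^j) (hp : p ≤ j) :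
    (v-1).testBit p = decide (p < j) := by
  have hv : 2^(j+1) * (v / 2^(j+1)) + 2^j = v := by rw [← h]; exact Nat.div_add_mod v _
  have hj1 : (0:ℕ) < 2^j := Nat.two_pow_pos j
  have hpred : v - 1 = 2^(j+1) * (v / 2^(j+1)) + (2^j - 1) := by omega
  have hle : (2:ℕ)^j ≤ 2^(j+1) := Nat.pow_le_pow_right two_pos (Nat.le_succ j)
  have hmod : (v-1) % 2^(j+1) = 2^j - 1 := by
    rw [hpred, Nat.mul_add_mod]
    exact Nat.mod_eq_of_lt (by omega)
  have := Nat.testBit_mod_two_pow (v-1) (j+1) p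
  rw [hmod, Nat.testBit_two_pow_sub_one] at this
  rw [show (decide (p < j+1)) = true by simpa using Nat.lt_succ_of_le hp] at this
  simpa using this.symm

lemma testBit_pred_gt {v j p : ℕ} (h : v % 2^(j+1) = 2^j) (hp : j < p) :
    (v-1).testBit p = v.testBit p := by
  have hdvd : (2:ℕ)^(j+1) ∣ 2^p := pow_dvd_pow 2 hp
  have hmm : v % 2^p % 2^(j+1) = 2^j := by rw [Nat.mod_mod_of_dvd v hdvd]; exact h
  have hj1 : (0:ℕ) < 2^j := Nat.two_pow_pos j
  have hrpos : 0 < v % 2^p := by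
    rcases Nat.eq_zero_or_pos (v % 2^p) with h0 | h0
    · rw [h0] at hmm; simp at hmm; omega
    · exact h0
  have h1 : 2^p * (v / 2^p) + v % 2^p = v := Nat.div_add_mod v _
  have hlt : v % 2^p < 2^p := Nat.mod_lt v (Nat.two_pow_pos p)
  have hdiv : (v-1) / 2^p = v / 2^p := by
    have h2 : v - 1 = 2^p * (v / 2^p) + (v % 2^p - 1) := by omega
    rw [h2, Nat.mul_add_div (Nat.two_pow_pos p)]
    have h3 : (v % 2^p - 1) / 2^p = 0 := Nat.div_eq_of_lt (by omega)
    rw [h3, Nat.add_zero]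
  rw [Nat.testBit_eq_decide_div_mod_eq, Nat.testBit_eq_decide_div_mod_eq, hdiv]

lemma low_exists : ∀ v : ℕ, 0 < v → ∃ j, v % 2^(j+1) = 2^j := by
  intro v
  induction v using Nat.strong_induction_on with
  | _ v ih =>
    intro hv
    rcases Nat.even_or_odd v with he | ho
    · obtain ⟨w, rfl⟩ := he
      have hw : 0 < w := by omega
      obtain ⟨j, hj⟩ := ih w (by omega) hw
      exact ⟨j+1, by rw [show w + w = 2 * w by ring, pow_succ 2 (j+1), mul_comm (2^(j+1)) 2,
        Nat.mul_mod_mul_left, hj, pow_succ, mul_comm]⟩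
    · exact ⟨0, by simpa [Nat.pow_succ] using Nat.odd_iff.mp ho⟩

lemma low_lt {v j N : ℕ} (h : v % 2^(j+1) = 2^j) (hv : v < 2^N) : j < N := by
  have h1 : 2^j ≤ v := h ▸ Nat.mod_le v _
  have := lt_of_le_of_lt h1 hv
  exact (Nat.pow_lt_pow_iff_right one_lt_two).mp this

lemma stepSet_fset {k v j : ℕ} (hj : j < k+1) (h : v % 2^(j+1) = 2^j) :
    (Ak k).stepSet (fset k v) ⟨j, hj⟩ = fset k (v-1) := by
  ext p
  rw [ak_mem_stepSet]
  have hbj : v.testBit j = true := low_testBit_self h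
  simp only [fset, Set.mem_setOf_eq, Fin.lt_def, Fin.val_zero]
  rcases lt_trichotomy (p : ℕ) j with hc | hc | hc
  · rw [testBit_pred_lt h hc.le]
    constructor
    · intro _; simp [hc]
    · intro _; exact Or.inr ⟨hbj, by omega, hc⟩
  · rw [testBit_pred_lt h hc.le]
    constructor
    · rintro (⟨_, hlt⟩ | ⟨_, _, hlt⟩) <;> omega
    · intro hfalse; rw [hc] at hfalse; simp at hfalse
  · rw [testBit_pred_gt h hc]
    constructor
    · rintro (⟨hb, _⟩ | ⟨_, _, hlt⟩)
      · exact hb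
      · omega
    · intro hb; exact Or.inl ⟨hb, hc⟩

lemma fset_inj {k u v : ℕ} (hu : u < 2^(k+1)) (hv : v < 2^(k+1)) (h : fset k u = fset k v) :
    u = v := by
  apply Nat.eq_of_testBit_eq
  intro i
  by_cases hi : i < k+1
  · have h2 := Set.ext_iff.mp h ⟨i, hi⟩
    simp only [fset, Set.mem_setOf_eq] at h2
    cases hb1 : u.testBit i <;> cases hb2 : v.testBit i <;> simp_all
  · rw [Nat.testBit_lt_two_pow (lt_of_lt_of_le hu (Nat.pow_le_pow_right two_pos (le_of_not_gt hi))),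
       Nat.testBit_lt_two_pow (lt_of_lt_of_le hv (Nat.pow_le_pow_right two_pos (le_of_not_gt hi)))]

lemma fset_surj {k : ℕ} (S : Set (Fin (k+1))) : ∃ v < 2^(k+1), fset k v = S := by
  have hinj : Function.Injective (fun i : Fin (2^(k+1)) => fset k i.val) :=
    fun a b hab => Fin.ext (fset_inj a.isLt b.isLt hab)
  have hbij : Function.Bijective (fun i : Fin (2^(k+1)) => fset k i.val) :=
    (Fintype.bijective_iff_injective_and_card _).mpr ⟨hinj, by simp [Fintype.card_set]⟩
  obtain ⟨i, hi⟩ := hbij.2 S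
  exact ⟨i.val, i.isLt, hi⟩

lemma fset_univ (k : ℕ) : fset k (2^(k+1)-1) = Set.univ := by
  ext q
  simp [fset, Nat.testBit_two_pow_sub_one, q.isLt, Nat.le_of_lt_succ q.isLt]

lemma exists_word (k : ℕ) : ∀ d, d ≤ 2^(k+1) - 1 →
    ∃ w : List (Fin (k+1)), (Ak k).toDFA.eval w = fset k (2^(k+1) - 1 - d) := by
  intro d
  induction d with
  | zero =>
    intro _
    exact ⟨[], by rw [DFA.eval_nil]; exact (fset_univ k).symm⟩
  | succ d ih =>
    intro hd
    obtain ⟨w, hw⟩ := ih (by omega)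
    have hpos : 0 < 2^(k+1) - 1 - d := by omega
    obtain ⟨j, hj⟩ := low_exists _ hpos
    have hjk : j < k+1 := low_lt hj (by have := Nat.two_pow_pos (k+1); omega)
    refine ⟨w ++ [⟨j, hjk⟩], ?_⟩
    rw [DFA.eval_append_singleton, hw]
    have : (Ak k).toDFA.step (fset k (2^(k+1)-1-d)) ⟨j, hjk⟩
        = fset k (2^(k+1)-1-d-1) := stepSet_fset hjk hj
    rw [this]
    congr 1

lemma ak_reach {k : ℕ} (S : Set (Fin (k+1))) : ∃ w, (Ak k).toDFA.eval w = S := by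
  obtain ⟨v, hv, rfl⟩ := fset_surj S
  have he : 2^(k+1) - 1 - (2^(k+1) - 1 - v) = v := by omega
  obtain ⟨w, hw⟩ := exists_word k (2^(k+1) - 1 - v) (by omega)
  rw [he] at hw
  exact ⟨w, hw⟩



def probe (k q : ℕ) : List (Fin (k+1)) :=
  (List.range q).reverse.map (fun i => ⟨(i+1) % (k+1), Nat.mod_lt _ (Nat.succ_pos k)⟩)

lemma probe_succ (k q : ℕ) :
    probe k (q+1) = ⟨(q+1) % (k+1), Nat.mod_lt _ (Nat.succ_pos k)⟩ :: probe k q := by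
  simp [probe, List.range_succ]

lemma probe_spec {k : ℕ} : ∀ q : ℕ, (hq : q < k+1) → ∀ S : Set (Fin (k+1)),
    ((0 : Fin (k+1)) ∈ (Ak k).toDFA.evalFrom S (probe k q) ↔ (⟨q, hq⟩ : Fin (k+1)) ∈ S) := by
  intro q
  induction q with
  | zero =>
    intro hq S
    have h0 : (⟨0, hq⟩ : Fin (k+1)) = 0 := by ext; simp
    rw [h0]
    simp [probe]
  | succ q ih =>
    intro hq S
    have hq' : q < k+1 := by omega
    rw [probe_succ]
    rw [show (Ak k).toDFA.evalFrom S (⟨(q+1) % (k+1), Nat.mod_lt _ (Nat.succ_pos k)⟩ :: probe k q)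
        = (Ak k).toDFA.evalFrom
          ((Ak k).toDFA.step S ⟨(q+1) % (k+1), Nat.mod_lt _ (Nat.succ_pos k)⟩) (probe k q) from rfl]
    rw [ih hq']
    have ha : (⟨(q+1) % (k+1), Nat.mod_lt _ (Nat.succ_pos k)⟩ : Fin (k+1)) = ⟨q+1, hq⟩ :=
      Fin.ext (by simpa using Nat.mod_eq_of_lt hq)
    rw [ha]
    rw [show (Ak k).toDFA.step S ⟨q+1, hq⟩ = (Ak k).stepSet S ⟨q+1, hq⟩ from rfl, ak_mem_stepSet]
    simp only [Fin.lt_def, Fin.val_zero]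
    constructor
    · rintro (⟨_, hlt⟩ | ⟨hmem, _, _⟩)
      · exact absurd hlt (by omega)
      · exact hmem
    · intro hmem
      exact Or.inr ⟨hmem, by omega, by omega⟩

lemma ak_dist {k : ℕ} (S T : Set (Fin (k+1)))
    (h : ∀ w, ((Ak k).toDFA.evalFrom S w ∈ (Ak k).toDFA.accept ↔
        (Ak k).toDFA.evalFrom T w ∈ (Ak k).toDFA.accept)) : S = T := by
  ext q
  have hw := h (probe k q.val)
  have hacc : ∀ X : Set (Fin (k+1)),
      X ∈ (Ak k).toDFA.accept ↔ (0 : Fin (k+1)) ∈ X := by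
    intro X
    simp [NFA.toDFA, Ak]
  rw [hacc, hacc, probe_spec q.val q.isLt S, probe_spec q.val q.isLt T] at hw
  simpa [Fin.eta] using hw

lemma ak_path (k : ℕ) : DFAHasSimplePath ((Ak k).toDFA) (2^(k+1) - 1) := by
  classical
  have hN := Nat.two_pow_pos (k+1)
  have hpos : ∀ i : Fin (2^(k+1) - 1), 0 < 2^(k+1) - 1 - i.val := fun i => by
    have := i.isLt; omega
  let J : Fin (2^(k+1) - 1) → ℕ := fun i => Classical.choose (low_exists _ (hpos i))
  have hJ : ∀ i, (2^(k+1) - 1 - i.val) % 2^(J i + 1) = 2^(J i) := fun i =>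
    Classical.choose_spec (low_exists _ (hpos i))
  have hJk : ∀ i, J i < k+1 := fun i => low_lt (hJ i) (by omega)
  refine ⟨fun i => fset k (2^(k+1) - 1 - i.val), fun i => ⟨J i, hJk i⟩, ?_, ?_⟩
  · intro a b hab
    have h1 := fset_inj (u := 2^(k+1) - 1 - a.val) (v := 2^(k+1) - 1 - b.val)
      (by omega) (by omega) hab
    have ha := a.isLt
    have hb := b.isLt
    exact Fin.ext (by omega)
  · intro i
    have hstep := stepSet_fset (hJk i) (hJ i)
    show (Ak k).toDFA.step (fset k (2^(k+1) - 1 - i.castSucc.val)) _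
        = fset k (2^(k+1) - 1 - i.succ.val)
    rw [Fin.coe_castSucc]
    rw [show (Ak k).toDFA.step (fset k (2^(k+1) - 1 - i.val)) ⟨J i, hJk i⟩
        = fset k (2^(k+1) - 1 - i.val - 1) from hstep]
    congr 1

lemma ak_depth_le {k m : ℕ} (h : DFAHasSimplePath ((Ak k).toDFA) m) : m ≤ 2^(k+1) - 1 := by
  obtain ⟨qs, _, hinj, _⟩ := h
  have hle := Fintype.card_le_of_injective qs hinj
  simp only [Fintype.card_set, Fintype.card_fin] at hle
  have := Nat.two_pow_pos (k+1)
  omega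

lemma accept_iff' {α τ : Type*} (D : DFA α τ) (x u : List α) :
    (D.evalFrom (D.eval x) u ∈ D.accept ↔ (x ++ u) ∈ D.accepts) := by
  rw [DFA.mem_accepts]
  have h : D.eval (x ++ u) = D.evalFrom (D.eval x) u := DFA.evalFrom_of_append D D.start x u
  rw [h]

lemma eval_congr' {α τ₁ τ₂ : Type*} (D₁ : DFA α τ₁) (D₂ : DFA α τ₂)
    (h₂ : IsMinimalDFA D₂) (hacc : D₁.accepts = D₂.accepts)
    {w w' : List α} (h : D₁.eval w = D₁.eval w') : D₂.eval w = D₂.eval w' := by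
  apply h₂.2
  intro u
  rw [accept_iff' D₂ w u, accept_iff' D₂ w' u, ← hacc, ← accept_iff' D₁ w u,
    ← accept_iff' D₁ w' u, h]

lemma path_transfer {α τ₁ τ₂ : Type*} (D₁ : DFA α τ₁) (D₂ : DFA α τ₂)
    (h₁ : IsMinimalDFA D₁) (h₂ : IsMinimalDFA D₂) (hacc : D₁.accepts = D₂.accepts)
    {m : ℕ} (hp : DFAHasSimplePath D₁ m) : DFAHasSimplePath D₂ m := by
  classical
  let rep : τ₁ → List α := fun q => Classical.choose (h₁.1 q)
  have hrep : ∀ q, D₁.eval (rep q) = q := fun q => Classical.choose_spec (h₁.1 q)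
  let φ : τ₁ → τ₂ := fun q => D₂.eval (rep q)
  have φeval : ∀ w, φ (D₁.eval w) = D₂.eval w := fun w =>
    eval_congr' D₁ D₂ h₂ hacc (hrep _)
  have φinj : Function.Injective φ := by
    intro a b hab
    have h3 := eval_congr' D₂ D₁ h₁ hacc.symm hab
    rw [hrep, hrep] at h3
    exact h3
  have φstep : ∀ q a, φ (D₁.step q a) = D₂.step (φ q) a := by
    intro q a
    have h1 : D₁.step q a = D₁.eval (rep q ++ [a]) := by
      rw [DFA.eval_append_singleton, hrep]
    rw [h1, φeval, DFA.eval_append_singleton]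
  obtain ⟨qs, as, hinj, hsteps⟩ := hp
  exact ⟨φ ∘ qs, as, φinj.comp hinj, fun i => by
    simp only [Function.comp_apply]
    rw [← hsteps i, φstep]⟩

/-- The minimal DFA recognizing `L(A_k)` has depth `2^(k+1) - 1`. -/
theorem stmt10 (k : ℕ) :
    (∃ (τ : Type) (_ : Fintype τ) (D : DFA (Fin (k + 1)) τ),
      IsMinimalDFA D ∧ D.accepts = (Ak k).accepts ∧ dfaDepth D = 2 ^ (k + 1) - 1) ∧
    (∀ (τ : Type) (D : DFA (Fin (k + 1)) τ),
      IsMinimalDFA D → D.accepts = (Ak k).accepts → dfaDepth D = 2 ^ (k + 1) - 1) := by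
  have hmin : IsMinimalDFA ((Ak k).toDFA) := ⟨ak_reach, fun S T h => ak_dist S T h⟩
  have hacc : (Ak k).toDFA.accepts = (Ak k).accepts := (Ak k).toDFA_correct
  have hdep : dfaDepth ((Ak k).toDFA) = 2 ^ (k + 1) - 1 := by
    apply le_antisymm
    · exact csSup_le ⟨_, ak_path k⟩ (fun m hm => ak_depth_le hm)
    · exact le_csSup ⟨2 ^ (k + 1) - 1, fun m hm => ak_depth_le hm⟩ (ak_path k)
  constructor
  · exact ⟨Set (Fin (k + 1)), inferInstance, (Ak k).toDFA, hmin, hacc, hdep⟩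
  · intro τ D hD hDacc
    have hsets : {m | DFAHasSimplePath D m} = {m | DFAHasSimplePath ((Ak k).toDFA) m} := by
      ext m
      exact ⟨fun h => path_transfer D _ hD hmin (hDacc.trans hacc.symm) h,
        fun h => path_transfer _ D hmin hD (hacc.trans hDacc.symm) h⟩
    show sSup {m | DFAHasSimplePath D m} = 2 ^ (k + 1) - 1
    rw [hsets]
    exact hdep
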